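/- (Proposition 4.1) Fix an integer K ≥ 2; for each user k ∈ {2,…,K} let G_k be an m×m complex Hermitian positive semidefinite matrix (the received covariance H_{k1}S_kH_{k1}ᴴ of user k's signal at user 1's receiver) and r_k ≥ 0 a real rate. Then there exists a decodable user set 𝒰₁* for user 1 such that every decodable user set 𝒰 for user 1 satisfies 𝒰 ⊆ 𝒰₁*. In particular, among all decodable user sets there is exactly one of maximum cardinality (the optimal decodable user set is unique). -/

import Mathlib

open Matrix
open scoped ComplexOrder

/-- Definition 4.1: a subset 𝒰 ⊆ {2,…,K} is a decodable user set for user 1 if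
for every nonempty 𝒥 ⊆ 𝒰 the sum rate of 𝒥 does not exceed the corresponding
MAC constraint, treating the users outside 𝒰 as colored Gaussian noise. -/
def IsDecodableUserSet {m : ℕ} (K : ℕ) (G : ℕ → Matrix (Fin m) (Fin m) ℂ)
    (r : ℕ → ℝ) (U : Finset ℕ) : Prop :=
  U ⊆ Finset.Icc 2 K ∧
  ∀ J ⊆ U, J.Nonempty →
    ∑ i ∈ J, r i ≤
      Real.log ((1 + (∑ k ∈ Finset.Icc 2 K \ U, G k) + ∑ i ∈ J, G i).det.re) -
        Real.log ((1 + ∑ k ∈ Finset.Icc 2 K \ U, G k).det.re)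


variable {n : ℕ}

lemma detRePos {M : Matrix (Fin n) (Fin n) ℂ} (hM : M.PosDef) :
    0 < M.det.re ∧ M.det.im = 0 := by
  have := hM.det_pos
  rw [Complex.lt_def] at this
  exact ⟨by simpa using this.1, this.2.symm⟩

-- det (1 + Z) ≥ 1 for PSD Z
lemma one_le_det_re_one_add {Z : Matrix (Fin n) (Fin n) ℂ} (hZ : Z.PosSemidef) :
    1 ≤ (1 + Z).det.re := by
  have hH := hZ.isHermitian
  set V : Matrix (Fin n) (Fin n) ℂ := (hH.eigenvectorUnitary : Matrix (Fin n) (Fin n) ℂ)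
  have hVs : V * star V = 1 := (Matrix.mem_unitaryGroup_iff).mp hH.eigenvectorUnitary.2
  have hfact : 1 + Z = V * (1 + diagonal (RCLike.ofReal ∘ hH.eigenvalues)) * star V := by
    rw [Matrix.mul_add, Matrix.add_mul, Matrix.mul_one, hVs]
    conv_lhs => rw [hH.spectral_theorem, Unitary.conjStarAlgAut_apply]
  have hdet : (1 + Z).det = ∏ i, (1 + (hH.eigenvalues i : ℂ)) := by
    rw [hfact, det_mul, det_mul, mul_comm, ← mul_assoc, ← det_mul]
    rw [show star V * V = 1 from (Matrix.mem_unitaryGroup_iff').mp hH.eigenvectorUnitary.2, det_one, one_mul]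
    rw [← Matrix.diagonal_one, diagonal_add, det_diagonal]
    simp [Function.comp]
  have : (1 + Z).det = ((∏ i, (1 + hH.eigenvalues i) : ℝ) : ℂ) := by
    rw [hdet]; push_cast; rfl
  rw [this, Complex.ofReal_re]
  have hp : ∏ _i : Fin n, (1:ℝ) ≤ ∏ i : Fin n, (1 + hH.eigenvalues i) := by
    apply Finset.prod_le_prod
    · intro i _; norm_num
    · intro i _
      have h0 : 0 ≤ hH.eigenvalues i := hZ.eigenvalues_nonneg i
      linarith
  simpa using hp
variable {n : ℕ}

open scoped MatrixOrder in
noncomputable def Matrix.PosSemidef.sqrt {C : Matrix (Fin n) (Fin n) ℂ} (_hC : C.PosSemidef) :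
    Matrix (Fin n) (Fin n) ℂ := CFC.sqrt C

open scoped MatrixOrder in
lemma Matrix.PosSemidef.sqrt_mul_self {C : Matrix (Fin n) (Fin n) ℂ} (hC : C.PosSemidef) :
    hC.sqrt * hC.sqrt = C := CFC.sqrt_mul_sqrt_self C hC.nonneg

open scoped MatrixOrder in
lemma Matrix.PosSemidef.posSemidef_sqrt {C : Matrix (Fin n) (Fin n) ℂ} (hC : C.PosSemidef) :
    hC.sqrt.PosSemidef := (CFC.sqrt_nonneg C).posSemidef

-- factorization: det (P + C) = det P * det (1 + csq * P⁻¹ * csq)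
lemma det_add_psd_fact {P C : Matrix (Fin n) (Fin n) ℂ} (hP : P.PosDef) (hC : C.PosSemidef) :
    (P + C).det = P.det * (1 + hC.sqrt * P⁻¹ * hC.sqrt).det := by
  have hPu : IsUnit P.det := hP.det_pos.ne'.isUnit
  have hfact : P + C = P * (1 + P⁻¹ * C) := by
    rw [Matrix.mul_add, Matrix.mul_one, ← Matrix.mul_assoc, Matrix.mul_nonsing_inv _ hPu,
      Matrix.one_mul]
  rw [hfact, det_mul]
  congr 1
  have : P⁻¹ * C = (P⁻¹ * hC.sqrt) * hC.sqrt := by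
    rw [Matrix.mul_assoc, hC.sqrt_mul_self]
  rw [this, Matrix.det_one_add_mul_comm, ← Matrix.mul_assoc]

lemma psd_conj_sqrt {P C : Matrix (Fin n) (Fin n) ℂ} (hP : P.PosSemidef) (hC : C.PosSemidef) :
    (hC.sqrt * P * hC.sqrt).PosSemidef := by
  have h := hP.conjTranspose_mul_mul_same (B := hC.sqrt)
  rwa [hC.posSemidef_sqrt.isHermitian.eq] at h

-- monotonicity of det.re on PD + PSD
lemma det_re_mono {P C : Matrix (Fin n) (Fin n) ℂ} (hP : P.PosDef) (hC : C.PosSemidef) :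
    P.det.re ≤ (P + C).det.re := by
  have hX : (hC.sqrt * P⁻¹ * hC.sqrt).PosSemidef := psd_conj_sqrt hP.inv.posSemidef hC
  have h1 : (1 : Matrix (Fin n) (Fin n) ℂ).PosDef := Matrix.PosDef.one
  have hfac := det_add_psd_fact hP hC
  have hPre := hP.det_pos
  rw [Complex.lt_def] at hPre
  have h1X : (1 + hC.sqrt * P⁻¹ * hC.sqrt).PosDef := h1.add_posSemidef hX
  have h1Xre := h1X.det_pos
  rw [Complex.lt_def] at h1Xre
  have hre : (P + C).det.re = P.det.re * (1 + hC.sqrt * P⁻¹ * hC.sqrt).det.re := by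
    rw [hfac, Complex.mul_re, ← hPre.2, ← h1Xre.2]; simp
  rw [hre]
  exact le_mul_of_one_le_right hPre.1.le (one_le_det_re_one_add hX)

-- inverse antitone
lemma inv_sub_inv_psd {M D : Matrix (Fin n) (Fin n) ℂ} (hM : M.PosDef) (hD : D.PosSemidef) :
    (M⁻¹ - (M + D)⁻¹).PosSemidef := by
  have hN : (M + D).PosDef := hM.add_posSemidef hD
  have hMu : IsUnit M.det := hM.det_pos.ne'.isUnit
  have hNu : IsUnit (M + D).det := hN.det_pos.ne'.isUnit
  have key : M⁻¹ - (M + D)⁻¹ = (M + D)⁻¹ * (D + D * M⁻¹ * D) * (M + D)⁻¹ := by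
    have h1 : M⁻¹ - (M + D)⁻¹ = (M + D)⁻¹ * D * M⁻¹ := by
      have : (M + D)⁻¹ * D * M⁻¹ = (M + D)⁻¹ * ((M + D) - M) * M⁻¹ := by
        rw [add_sub_cancel_left]
      rw [this, Matrix.mul_sub, Matrix.sub_mul, Matrix.nonsing_inv_mul _ hNu, Matrix.one_mul,
        Matrix.mul_assoc, Matrix.mul_nonsing_inv _ hMu, Matrix.mul_one]
    have h2 : (M + D)⁻¹ * (D + D * M⁻¹ * D) * (M + D)⁻¹ = (M + D)⁻¹ * D * M⁻¹ := by
      have e1 : D * M⁻¹ * (M + D) = D + D * M⁻¹ * D := by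
        rw [Matrix.mul_add, Matrix.mul_assoc D M⁻¹ M, Matrix.nonsing_inv_mul _ hMu,
          Matrix.mul_one]
      rw [← e1, ← Matrix.mul_assoc, Matrix.mul_assoc ((M+D)⁻¹ * (D * M⁻¹)),
        Matrix.mul_nonsing_inv _ hNu, Matrix.mul_one, ← Matrix.mul_assoc]
    rw [h1, ← h2]
  rw [key]
  have hT : (D + D * M⁻¹ * D).PosSemidef := by
    have : D * M⁻¹ * D = Dᴴ * M⁻¹ * D := by rw [hD.isHermitian.eq]
    exact hD.add (this ▸ hM.inv.posSemidef.conjTranspose_mul_mul_same (B := D))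
  have h := hT.conjTranspose_mul_mul_same (B := (M + D)⁻¹)
  rwa [hN.inv.isHermitian.eq] at h
lemma core_det_ineq {M D C : Matrix (Fin n) (Fin n) ℂ} (hM : M.PosDef)
    (hD : D.PosSemidef) (hC : C.PosSemidef) :
    (M + D + C).det.re * M.det.re ≤ (M + C).det.re * (M + D).det.re := by
  have hN : (M + D).PosDef := hM.add_posSemidef hD
  set csq := hC.sqrt with hcsq
  have hX : (csq * (M + D)⁻¹ * csq).PosSemidef := psd_conj_sqrt hN.inv.posSemidef hC
  have hY : (csq * M⁻¹ * csq).PosSemidef := psd_conj_sqrt hM.inv.posSemidef hC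
  have hR : (csq * M⁻¹ * csq - csq * (M + D)⁻¹ * csq).PosSemidef := by
    have : csq * M⁻¹ * csq - csq * (M + D)⁻¹ * csq
        = csq * (M⁻¹ - (M + D)⁻¹) * csq := by
      rw [Matrix.mul_sub, Matrix.sub_mul]
    rw [this]
    exact psd_conj_sqrt (inv_sub_inv_psd hM hD) hC
  -- det mono between 1+X and 1+Y
  have h1X : (1 + csq * (M + D)⁻¹ * csq).PosDef := Matrix.PosDef.one.add_posSemidef hX
  have h1Y : (1 + csq * M⁻¹ * csq).PosDef := Matrix.PosDef.one.add_posSemidef hY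
  have hmono : (1 + csq * (M + D)⁻¹ * csq).det.re ≤ (1 + csq * M⁻¹ * csq).det.re := by
    have h := det_re_mono h1X hR
    have he : 1 + csq * (M + D)⁻¹ * csq + (csq * M⁻¹ * csq - csq * (M + D)⁻¹ * csq)
        = 1 + csq * M⁻¹ * csq := by abel
    rwa [he] at h
  -- rewrite both sides via factorizations
  have hfacC : (M + C).det = M.det * (1 + csq * M⁻¹ * csq).det := det_add_psd_fact hM hC
  have hfacDC : (M + D + C).det = (M + D).det * (1 + csq * (M + D)⁻¹ * csq).det :=
    det_add_psd_fact hN hC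
  have hMre := detRePos hM
  have hNre := detRePos hN
  have h1Xre := detRePos h1X
  have h1Yre := detRePos h1Y
  have e1 : (M + D + C).det.re = (M + D).det.re * (1 + csq * (M + D)⁻¹ * csq).det.re := by
    rw [hfacDC, Complex.mul_re, hNre.2, h1Xre.2]; ring
  have e2 : (M + C).det.re = M.det.re * (1 + csq * M⁻¹ * csq).det.re := by
    rw [hfacC, Complex.mul_re, hMre.2, h1Yre.2]; ring
  rw [e1, e2]
  nlinarith [mul_le_mul_of_nonneg_left hmono (mul_nonneg hNre.1.le hMre.1.le)]

lemma log_marginal_mat {M D C : Matrix (Fin n) (Fin n) ℂ} (hM : M.PosDef)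
    (hD : D.PosSemidef) (hC : C.PosSemidef) :
    Real.log ((M + D + C).det.re) - Real.log ((M + D).det.re) ≤
      Real.log ((M + C).det.re) - Real.log (M.det.re) := by
  have hN : (M + D).PosDef := hM.add_posSemidef hD
  have hNC : (M + D + C).PosDef := hN.add_posSemidef hC
  have hMC : (M + C).PosDef := hM.add_posSemidef hC
  have a1 := (detRePos hNC).1
  have a2 := (detRePos hN).1
  have a3 := (detRePos hMC).1
  have a4 := (detRePos hM).1
  rw [sub_le_sub_iff, ← Real.log_mul a1.ne' a4.ne', ← Real.log_mul a3.ne' a2.ne']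
  exact Real.log_le_log (by positivity) (core_det_ineq hM hD hC)
section Comb

variable {m : ℕ} {K : ℕ} {G : ℕ → Matrix (Fin m) (Fin m) ℂ}

/-- log-det of `1 + ∑_{k∈A} G k`. -/
noncomputable def lndetF (G : ℕ → Matrix (Fin m) (Fin m) ℂ) (A : Finset ℕ) : ℝ :=
  Real.log ((1 + ∑ k ∈ A, G k).det.re)

lemma sum_psd (hG : ∀ k ∈ Finset.Icc 2 K, (G k).PosSemidef) {A : Finset ℕ}
    (hA : A ⊆ Finset.Icc 2 K) : (∑ k ∈ A, G k).PosSemidef := by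
  classical
  induction A using Finset.induction_on with
  | empty => simpa using (Matrix.PosSemidef.zero (n := Fin m) (R := ℂ))
  | @insert a s ha ih =>
    rw [Finset.sum_insert ha]
    exact (hG a (hA (Finset.mem_insert_self a s))).add
      (ih (fun k hk => hA (Finset.mem_insert_of_mem hk)))

lemma one_add_sum_posDef (hG : ∀ k ∈ Finset.Icc 2 K, (G k).PosSemidef) {A : Finset ℕ}
    (hA : A ⊆ Finset.Icc 2 K) : (1 + ∑ k ∈ A, G k).PosDef :=
  Matrix.PosDef.one.add_posSemidef (sum_psd hG hA)

lemma lndet_marginal (hG : ∀ k ∈ Finset.Icc 2 K, (G k).PosSemidef)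
    {A B X : Finset ℕ} (hAB : A ⊆ B) (hB : B ⊆ Finset.Icc 2 K)
    (hX : X ⊆ Finset.Icc 2 K) (hXB : Disjoint X B) :
    lndetF G (B ∪ X) - lndetF G B ≤ lndetF G (A ∪ X) - lndetF G A := by
  have hA : A ⊆ Finset.Icc 2 K := hAB.trans hB
  have hM : (1 + ∑ k ∈ A, G k).PosDef := one_add_sum_posDef hG hA
  have hD : (∑ k ∈ B \ A, G k).PosSemidef := sum_psd hG (Finset.Subset.trans (Finset.sdiff_subset) hB)
  have hC : (∑ k ∈ X, G k).PosSemidef := sum_psd hG hX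
  have hBsum : ∑ k ∈ B, G k = ∑ k ∈ A, G k + ∑ k ∈ B \ A, G k := by
    rw [add_comm, Finset.sum_sdiff hAB]
  have eB : (1 : Matrix (Fin m) (Fin m) ℂ) + ∑ k ∈ B, G k
      = (1 + ∑ k ∈ A, G k) + ∑ k ∈ B \ A, G k := by rw [hBsum]; abel
  have eBX : (1 : Matrix (Fin m) (Fin m) ℂ) + ∑ k ∈ B ∪ X, G k
      = (1 + ∑ k ∈ A, G k) + ∑ k ∈ B \ A, G k + ∑ k ∈ X, G k := by
    rw [Finset.sum_union hXB.symm, hBsum]; abel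
  have eAX : (1 : Matrix (Fin m) (Fin m) ℂ) + ∑ k ∈ A ∪ X, G k
      = (1 + ∑ k ∈ A, G k) + ∑ k ∈ X, G k := by
    rw [Finset.sum_union ((hXB.mono_right hAB).symm)]; abel
  have h := log_marginal_mat hM hD hC
  unfold lndetF
  rw [eB, eBX, eAX]
  exact h

end Comb
section Main

variable {m : ℕ} {K : ℕ} {G : ℕ → Matrix (Fin m) (Fin m) ℂ} {r : ℕ → ℝ}

lemma cond_eq {U J : Finset ℕ} (hsub : J ⊆ U) :
    Real.log ((1 + (∑ k ∈ Finset.Icc 2 K \ U, G k) + ∑ i ∈ J, G i).det.re) -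
        Real.log ((1 + ∑ k ∈ Finset.Icc 2 K \ U, G k).det.re)
      = lndetF G ((Finset.Icc 2 K \ U) ∪ J) - lndetF G (Finset.Icc 2 K \ U) := by
  unfold lndetF
  have hdisj : Disjoint (Finset.Icc 2 K \ U) J :=
    Finset.sdiff_disjoint.mono_right hsub
  rw [Finset.sum_union hdisj, ← add_assoc]

lemma decodable_empty : IsDecodableUserSet K G r ∅ :=
  ⟨Finset.empty_subset _, fun J hJ hne => (hne.ne_empty (Finset.subset_empty.mp hJ)).elim⟩

lemma decodable_union (hG : ∀ k ∈ Finset.Icc 2 K, (G k).PosSemidef)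
    {U V : Finset ℕ} (hU : IsDecodableUserSet K G r U) (hV : IsDecodableUserSet K G r V) :
    IsDecodableUserSet K G r (U ∪ V) := by
  obtain ⟨hUS, hUc⟩ := hU
  obtain ⟨hVS, hVc⟩ := hV
  refine ⟨Finset.union_subset hUS hVS, ?_⟩
  intro J hJ hJne
  set S := Finset.Icc 2 K with hS
  set W := U ∪ V with hW
  set N := S \ W with hN
  set JU := J ∩ U with hJU
  set JV := J \ U with hJVdef
  have hJUV : JU ∪ JV = J := by
    rw [hJU, hJVdef]
    ext x
    simp only [Finset.mem_union, Finset.mem_inter, Finset.mem_sdiff]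
    tauto
  have hdisjUV : Disjoint JU JV := by
    simp only [hJU, hJVdef, Finset.disjoint_left, Finset.mem_inter, Finset.mem_sdiff]
    tauto
  have hJVsubV : JV ⊆ V := by
    intro x hx
    rw [hJVdef, Finset.mem_sdiff] at hx
    rcases Finset.mem_union.mp (hJ hx.1) with h | h
    · exact absurd h hx.2
    · exact h
  have hJUsubU : JU ⊆ U := Finset.inter_subset_right
  have hNsubU : N ⊆ S \ U := Finset.sdiff_subset_sdiff (le_refl S) Finset.subset_union_left
  have hNsubV : N ⊆ S \ V := Finset.sdiff_subset_sdiff (le_refl S) Finset.subset_union_right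
  have hJVsubSU : JV ⊆ S \ U := by
    intro x hx
    rw [hJVdef, Finset.mem_sdiff] at hx
    exact Finset.mem_sdiff.mpr ⟨(Finset.union_subset hUS hVS) (hJ hx.1), hx.2⟩
  -- claim for JV
  have claim1 : ∑ i ∈ JV, r i ≤ lndetF G (N ∪ JV) - lndetF G N := by
    rcases Finset.eq_empty_or_nonempty JV with h | h
    · simp [h]
    · have h1 := hVc JV hJVsubV h
      rw [cond_eq hJVsubV] at h1
      have h2 := lndet_marginal hG hNsubV Finset.sdiff_subset
        (hJVsubV.trans hVS) (Finset.sdiff_disjoint.symm.mono_left hJVsubV)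
      exact h1.trans h2
  -- claim for JU
  have claim2 : ∑ i ∈ JU, r i ≤ lndetF G (N ∪ JV ∪ JU) - lndetF G (N ∪ JV) := by
    rcases Finset.eq_empty_or_nonempty JU with h | h
    · simp [h]
    · have h1 := hUc JU hJUsubU h
      rw [cond_eq hJUsubU] at h1
      have h2 := lndet_marginal hG (Finset.union_subset hNsubU hJVsubSU)
        Finset.sdiff_subset (hJUsubU.trans hUS)
        (Finset.sdiff_disjoint.symm.mono_left hJUsubU)
      exact h1.trans h2
  have hsumsplit : ∑ i ∈ J, r i = ∑ i ∈ JU, r i + ∑ i ∈ JV, r i := by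
    rw [← Finset.sum_union hdisjUV, hJUV]
  rw [cond_eq hJ]
  have huni : N ∪ JV ∪ JU = N ∪ J := by
    rw [Finset.union_assoc, Finset.union_comm JV JU, hJUV]
  rw [huni] at claim2
  linarith

end Main

/-- Proposition 4.1: there exists a decodable user set 𝒰₁*
containing every decodable user set; in particular the decodable user set of
maximum cardinality is unique. -/
theorem optimal_decodable_user_set_unique {m : ℕ} (K : ℕ) (hK : 2 ≤ K)
    (G : ℕ → Matrix (Fin m) (Fin m) ℂ) (r : ℕ → ℝ)
    (hG : ∀ k ∈ Finset.Icc 2 K, (G k).PosSemidef) (hr : ∀ k, 0 ≤ r k) :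
    ∃ Ustar : Finset ℕ, IsDecodableUserSet K G r Ustar ∧
      (∀ U : Finset ℕ, IsDecodableUserSet K G r U → U ⊆ Ustar) ∧
      (∀ U : Finset ℕ, IsDecodableUserSet K G r U → U.card = Ustar.card →
        U = Ustar) := by
  classical
  set D : Finset (Finset ℕ) :=
    (Finset.Icc 2 K).powerset.filter (IsDecodableUserSet K G r) with hD
  set Ustar : Finset ℕ := D.sup id with hUstar
  have hmem : ∀ U : Finset ℕ, IsDecodableUserSet K G r U → U ∈ D := fun U hU =>
    Finset.mem_filter.2 ⟨Finset.mem_powerset.2 hU.1, hU⟩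
  have hsub : ∀ U : Finset ℕ, IsDecodableUserSet K G r U → U ⊆ Ustar := fun U hU =>
    Finset.le_sup (f := id) (hmem U hU)
  have hstar : IsDecodableUserSet K G r Ustar := by
    apply Finset.sup_induction
    · exact decodable_empty
    · exact fun a ha b hb => decodable_union hG ha hb
    · exact fun U hU => (Finset.mem_filter.1 hU).2
  exact ⟨Ustar, hstar, hsub, fun U hU hcard =>
    Finset.eq_of_subset_of_card_le (hsub U hU) (le_of_eq hcard.symm)⟩
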